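/- Let T be a finite tree with at least one vertex and let S be a vertex cover of T (every edge of T has at least one endpoint in S) with |S| = k such that every vertex of T of degree at most 1 belongs to S. Then T has at most 2k − 1 vertices. -/
import Mathlib


open Classical

noncomputable section

/-- The plane. -/
abbrev Point : Type := ℝ × ℝ

/-- A straight-line drawing `f` of a simple graph `G` is *proper* if it is injective,
the segments of any two distinct edges sharing a vertex `v` intersect exactly in `f v`,
and no vertex other than the endpoints lies on the segment of an edge. -/
def IsProperDrawing {V : Type*} (G : SimpleGraph V) (f : V → Point) : Prop :=
  Function.Injective f ∧
  (∀ u v w : V, G.Adj u v → G.Adj v w → u ≠ w →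
    segment ℝ (f u) (f v) ∩ segment ℝ (f v) (f w) = {f v}) ∧
  (∀ u v x : V, G.Adj u v → x ≠ u → x ≠ v → f x ∉ segment ℝ (f u) (f v))

/-- A *planar* straight-line drawing: proper, and segments of edges with no
common endpoint are disjoint. -/
def IsPlanarDrawing {V : Type*} (G : SimpleGraph V) (f : V → Point) : Prop :=
  IsProperDrawing G f ∧
  ∀ u v w x : V, G.Adj u v → G.Adj w x → u ≠ w → u ≠ x → v ≠ w → v ≠ x →
    segment ℝ (f u) (f v) ∩ segment ℝ (f w) (f x) = ∅

/-- Number of bends of a path (given by its list of vertices) in the drawing `f`: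
a bend at each internal vertex `b` (consecutive triple `a, b, c`) such that
`f b` is not strictly between `f a` and `f c`. -/
def numBends {V : Type*} (f : V → Point) : List V → ℕ
  | a :: b :: c :: rest =>
    (if f b ∈ openSegment ℝ (f a) (f c) then 0 else 1) + numBends f (b :: c :: rest)
  | _ => 0

/-- The edges of a path given by its list of vertices. -/
def edgesOfList {V : Type*} : List V → List (Sym2 V)
  | a :: b :: rest => s(a, b) :: edgesOfList (b :: rest)
  | _ => []

/-- A list of vertices represents a simple path of `G`. -/
def IsPathList {V : Type*} (G : SimpleGraph V) (l : List V) : Prop :=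
  l.Chain' G.Adj ∧ l.Nodup

/-- A path-based support: a set of simple paths of `G` covering all edges of `G`. -/
def IsPathBasedSupport {V : Type*} (G : SimpleGraph V) (P : Finset (List V)) : Prop :=
  (∀ l ∈ P, IsPathList G l) ∧ ∀ e ∈ G.edgeSet, ∃ l ∈ P, e ∈ edgesOfList l

/-- A path-based support is *linear* if two distinct paths share at most one vertex. -/
def IsLinear {V : Type*} (P : Finset (List V)) : Prop :=
  ∀ l₁ ∈ P, ∀ l₂ ∈ P, l₁ ≠ l₂ →
    ∀ u v : V, u ∈ l₁ → u ∈ l₂ → v ∈ l₁ → v ∈ l₂ → u = v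

/-- An *alignment* of `G`: a symmetric relation pairing distinct incident edges of `G`,
such that at every vertex each incident edge is paired with at most one
other edge incident to that vertex. -/
structure IsAlignment {V : Type*} (G : SimpleGraph V) (A : Sym2 V → Sym2 V → Prop) : Prop where
  symm : ∀ e e', A e e' → A e' e
  mem_edges : ∀ e e', A e e' → e ∈ G.edgeSet ∧ e' ∈ G.edgeSet
  ne : ∀ e e', A e e' → e ≠ e'
  share : ∀ e e', A e e' → ∃ v : V, v ∈ e ∧ v ∈ e'
  uniq : ∀ (v : V) (e e₁ e₂ : Sym2 V), v ∈ e → v ∈ e₁ → v ∈ e₂ →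
    A e e₁ → A e e₂ → e₁ = e₂

/-- Number of bends of a path with respect to an alignment `A`:
a bend at each internal vertex whose two incident path edges are not paired in `A`. -/
def numBendsA {V : Type*} (A : Sym2 V → Sym2 V → Prop) : List V → ℕ
  | a :: b :: c :: rest =>
    (if A s(a, b) s(b, c) then 0 else 1) + numBendsA A (b :: c :: rest)
  | _ => 0

/-- A cactus: a connected graph in which every edge lies on at most one cycle,
i.e. two cycles sharing an edge have the same edge set. -/
def IsCactus {V : Type*} (G : SimpleGraph V) : Prop :=
  G.Connected ∧ ∀ (v w : V) (c : G.Walk v v) (c' : G.Walk w w),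
    c.IsCycle → c'.IsCycle → (∃ e, e ∈ c.edges ∧ e ∈ c'.edges) →
    ∀ e, e ∈ c.edges ↔ e ∈ c'.edges

end

set_option maxHeartbeats 1000000 in
/-- If `S` is a vertex cover of size `k` of a finite tree `T`
containing all vertices of degree at most 1, then `T` has at most `2k - 1` vertices. -/
theorem stmt6 {V : Type*} [Fintype V] (G : SimpleGraph V) [DecidableRel G.Adj]
    (hT : G.IsTree) (S : Finset V) (k : ℕ) (hk : S.card = k)
    (hcover : ∀ u v : V, G.Adj u v → u ∈ S ∨ v ∈ S)
    (hsmall : ∀ v : V, G.degree v ≤ 1 → v ∈ S) :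
    Fintype.card V ≤ 2 * k - 1 := by
  classical
  have hn : G.edgeFinset.card + 1 = Fintype.card V := hT.card_edgeFinset
  have hdeg : ∀ v ∈ Sᶜ, 2 ≤ G.degree v := by
    intro v hv
    by_contra h
    exact (Finset.mem_compl.mp hv) (hsmall v (by omega))
  have hdisj : ∀ u ∈ Sᶜ, ∀ v ∈ Sᶜ, u ≠ v →
      Disjoint (G.incidenceFinset u) (G.incidenceFinset v) := by
    intro u hu v hv huv
    rw [Finset.disjoint_left]
    intro e heu hev
    rw [SimpleGraph.mem_incidenceFinset] at heu hev
    have hadj : G.Adj u v := G.adj_of_mem_incidenceSet huv heu hev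
    rcases hcover u v hadj with h | h
    · exact (Finset.mem_compl.mp hu) h
    · exact (Finset.mem_compl.mp hv) h
  have hsum : ∑ v ∈ Sᶜ, G.degree v ≤ G.edgeFinset.card := by
    have h1 : ∑ v ∈ Sᶜ, (G.incidenceFinset v).card = (Sᶜ.biUnion (fun v => G.incidenceFinset v)).card :=
      (Finset.card_biUnion hdisj).symm
    calc ∑ v ∈ Sᶜ, G.degree v = ∑ v ∈ Sᶜ, (G.incidenceFinset v).card := by
          apply Finset.sum_congr rfl
          intro v _
          exact (G.card_incidenceFinset_eq_degree v).symm
      _ = (Sᶜ.biUnion (fun v => G.incidenceFinset v)).card := h1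
      _ ≤ G.edgeFinset.card := by
          apply Finset.card_le_card
          intro e he
          rcases Finset.mem_biUnion.mp he with ⟨v, _, hev⟩
          rw [SimpleGraph.mem_incidenceFinset] at hev
          exact SimpleGraph.mem_edgeFinset.mpr hev.1
  have h2 : 2 * Sᶜ.card ≤ ∑ v ∈ Sᶜ, G.degree v := by
    calc 2 * Sᶜ.card = ∑ _v ∈ Sᶜ, 2 := by rw [Finset.sum_const, smul_eq_mul, mul_comm]
      _ ≤ ∑ v ∈ Sᶜ, G.degree v := Finset.sum_le_sum hdeg
  have hcc : Sᶜ.card = Fintype.card V - S.card := by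
    rw [Finset.card_compl]
  have hkn : S.card ≤ Fintype.card V := Finset.card_le_univ S
  omega
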